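/- The function k ↦ (8k − 9k² − 1) / (k²·(5k² − 16k + 9)) is strictly decreasing on the interval (1/3, √3/3). -/

import Mathlib

/-- The Price of Anarchy expression for quadratic prices,
`k ↦ (8k − 9k² − 1)/(k²·(5k² − 16k + 9))`, is strictly decreasing on the
interval `(1/3, √3/3)`. -/
theorem stmt15 :
    StrictAntiOn
      (fun k : ℝ => (8 * k - 9 * k ^ 2 - 1) / (k ^ 2 * (5 * k ^ 2 - 16 * k + 9)))
      (Set.Ioo (1 / 3 : ℝ) (Real.sqrt 3 / 3)) := by
  have hs : Real.sqrt 3 < 9/5 := by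
    nlinarith [Real.sq_sqrt (by norm_num : (3:ℝ) ≥ 0), Real.sqrt_nonneg 3]
  have hs1 : (1:ℝ) < Real.sqrt 3 := by
    nlinarith [Real.sq_sqrt (by norm_num : (3:ℝ) ≥ 0), Real.sqrt_nonneg 3]
  have hD : ∀ x ∈ Set.Ioo (1 / 3 : ℝ) (Real.sqrt 3 / 3),
      x ^ 2 * (5 * x ^ 2 - 16 * x + 9) ≠ 0 := by
    intro x ⟨hx1, hx2⟩
    have hx0 : (0:ℝ) < x := by linarith
    have hx3 : x < 3/5 := by linarith
    have : 0 < x ^ 2 * (5 * x ^ 2 - 16 * x + 9) := by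
      have h1 : 0 < 5 * x ^ 2 - 16 * x + 9 := by nlinarith [sq_nonneg (1 - x)]
      positivity
    exact ne_of_gt this
  apply strictAntiOn_of_deriv_neg (convex_Ioo _ _)
  · exact ContinuousOn.div (by fun_prop) (by fun_prop) (by
      simpa using hD)
  · intro x hx
    rw [interior_Ioo] at hx
    obtain ⟨hx1, hx2⟩ := hx
    have hx0 : (0:ℝ) < x := by linarith
    have hx3 : x < 3/5 := by linarith
    have hd2 : 0 < 5 * x ^ 2 - 16 * x + 9 := by nlinarith [sq_nonneg (1 - x)]
    have hDx : x ^ 2 * (5 * x ^ 2 - 16 * x + 9) ≠ 0 := hD x ⟨hx1, hx2⟩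
    have hN : HasDerivAt (fun k : ℝ => 8 * k - 9 * k ^ 2 - 1) (8 - 18 * x) x := by
      have h : HasDerivAt (fun k : ℝ => 8 * k - 9 * k ^ 2 - 1) _ x := (((hasDerivAt_id x).const_mul 8).sub
        ((hasDerivAt_pow 2 x).const_mul 9)).sub_const 1
      convert h using 1 <;> ring
    have hDder : HasDerivAt (fun k : ℝ => k ^ 2 * (5 * k ^ 2 - 16 * k + 9))
        (2 * x * (5 * x ^ 2 - 16 * x + 9) + x ^ 2 * (10 * x - 16)) x := by
      have h1 : HasDerivAt (fun k : ℝ => k ^ 2) (2 * x) x := by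
        simpa using hasDerivAt_pow 2 x
      have h2 : HasDerivAt (fun k : ℝ => 5 * k ^ 2 - 16 * k + 9) (10 * x - 16) x := by
        have h : HasDerivAt (fun k : ℝ => 5 * k ^ 2 - 16 * k + 9) _ x := (((hasDerivAt_pow 2 x).const_mul 5).sub
          ((hasDerivAt_id x).const_mul 16)).add_const 9
        convert h using 1 <;> ring
      exact h1.mul h2
    have hf : HasDerivAt
        (fun k : ℝ => (8 * k - 9 * k ^ 2 - 1) / (k ^ 2 * (5 * k ^ 2 - 16 * k + 9)))
        (((8 - 18 * x) * (x ^ 2 * (5 * x ^ 2 - 16 * x + 9)) -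
          (8 * x - 9 * x ^ 2 - 1) * (2 * x * (5 * x ^ 2 - 16 * x + 9) + x ^ 2 * (10 * x - 16))) /
          (x ^ 2 * (5 * x ^ 2 - 16 * x + 9)) ^ 2) x := hN.div hDder hDx
    rw [hf.deriv]
    apply div_neg_of_neg_of_pos
    · have key : (8 - 18 * x) * (x ^ 2 * (5 * x ^ 2 - 16 * x + 9)) -
          (8 * x - 9 * x ^ 2 - 1) * (2 * x * (5 * x ^ 2 - 16 * x + 9) + x ^ 2 * (10 * x - 16))
          = 6 * x * (3 * x - 1) * (x - 1) ^ 2 * (5 * x - 3) := by ring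
      rw [key]
      have h1 : 0 < 3 * x - 1 := by linarith
      have h2 : 5 * x - 3 < 0 := by linarith
      have h3 : 0 < (x - 1) ^ 2 := by
        have : x - 1 ≠ 0 := by intro h; nlinarith
        positivity
      have := mul_neg_of_pos_of_neg
        (mul_pos (mul_pos (mul_pos (by norm_num : (0:ℝ) < 6) hx0) h1) h3) h2
      linarith [this]
    · have h1 : 0 < x ^ 2 * (5 * x ^ 2 - 16 * x + 9) := by positivity
      positivity
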